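/- (Necessary conditions at an optimum.) Let N ≥ 1, b_max > 0, let y_1, …, y_M ∈ ℝ^N have positive weights w_i^y, and let w_1^x, …, w_L^x > 0. Suppose the locations x_1, …, x_L ∈ ℝ^N form a local minimum of the function x ↦ D(x) = ∫_0^{b_max} b^{-(N-1)} ∫_{ℝ^N} (F̃(m,b) - F(m,b))² dm db over (ℝ^N)^L, and suppose the points are in general position in the sense that x_ξ ≠ y_i for all ξ, i and x_ξ ≠ x_i for all ξ ≠ i. Then for every ξ ∈ {1,…,L} and η ∈ {1,…,N}: Σ_{i=1}^L w_i^x (x_ξ^{(η)} - x_i^{(η)}) · Ei(-‖x_ξ - x_i‖²/(4 b_max²)) = Σ_{i=1}^M w_i^y (x_ξ^{(η)} - y_i^{(η)}) · Ei(-‖x_ξ - y_i‖²/(4 b_max²)), where the i = ξ term of the left-hand sum is interpreted as 0. -/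

import Mathlib

open MeasureTheory Real

/-- `negEi z` is the exponential integral `Ei(-z)`, defined for `z > 0` by
`Ei(-z) = -∫_z^∞ (e^{-t}/t) dt`. -/
noncomputable def negEi (z : ℝ) : ℝ := -∫ t in Set.Ioi z, Real.exp (-t) / t

open Set


lemma gauss1d (b : ℝ) (hb : 0 < b) (a c : ℝ) :
    ∫ s : ℝ, Real.exp (-(a - s)^2 / (2*b^2)) * Real.exp (-(c - s)^2 / (2*b^2))
      = Real.sqrt π * b * Real.exp (-(a-c)^2/(4*b^2)) := by
  have hb2 : (b:ℝ)^2 ≠ 0 := by positivity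
  have key : ∀ s : ℝ, Real.exp (-(a - s)^2 / (2*b^2)) * Real.exp (-(c - s)^2 / (2*b^2))
      = Real.exp (-(a-c)^2/(4*b^2)) * Real.exp (-(1/b^2) * (s - (a+c)/2)^2) := by
    intro s
    rw [← Real.exp_add, ← Real.exp_add]
    congr 1
    field_simp
    ring
  simp_rw [key]
  rw [integral_const_mul]
  have : ∫ s : ℝ, Real.exp (-(1/b^2) * (s - (a+c)/2)^2)
      = ∫ s : ℝ, Real.exp (-(1/b^2) * s^2) := by
    exact integral_sub_right_eq_self (fun s => Real.exp (-(1/b^2) * s^2)) ((a+c)/2)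
  rw [this, integral_gaussian]
  rw [show π / (1/b^2) = π * b^2 by field_simp]
  rw [Real.sqrt_mul pi_pos.le, Real.sqrt_sq hb.le]
  ring

lemma gauss1d_integrable (b : ℝ) (hb : 0 < b) (a c : ℝ) :
    Integrable (fun s : ℝ => Real.exp (-(a - s)^2 / (2*b^2)) * Real.exp (-(c - s)^2 / (2*b^2))) := by
  have hb2 : (b:ℝ)^2 ≠ 0 := by positivity
  have key : ∀ s : ℝ, Real.exp (-(a - s)^2 / (2*b^2)) * Real.exp (-(c - s)^2 / (2*b^2))
      = Real.exp (-(a-c)^2/(4*b^2)) * Real.exp (-(1/b^2) * (s - (a+c)/2)^2) := by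
    intro s
    rw [← Real.exp_add, ← Real.exp_add]
    congr 1
    field_simp
    ring
  simp_rw [key]
  exact ((integrable_exp_neg_mul_sq (by positivity : (0:ℝ) < 1/b^2)).comp_sub_right
    ((a+c)/2)).const_mul _

lemma gaussNd (N : ℕ) (b : ℝ) (hb : 0 < b) (p q : Fin N → ℝ) :
    ∫ m : Fin N → ℝ, (∏ k, Real.exp (-(p k - m k)^2/(2*b^2)))
        * (∏ k, Real.exp (-(q k - m k)^2/(2*b^2)))
      = (Real.sqrt π * b)^N * Real.exp (-(∑ k, (p k - q k)^2) / (4*b^2)) := by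
  have : ∀ m : Fin N → ℝ, (∏ k, Real.exp (-(p k - m k)^2/(2*b^2)))
        * (∏ k, Real.exp (-(q k - m k)^2/(2*b^2)))
      = ∏ k, (Real.exp (-(p k - m k)^2/(2*b^2)) * Real.exp (-(q k - m k)^2/(2*b^2))) := by
    intro m; rw [Finset.prod_mul_distrib]
  simp_rw [this]
  rw [MeasureTheory.integral_fintype_prod_volume_eq_prod (ι := Fin N)
    (f := fun k s => Real.exp (-(p k - s)^2/(2*b^2)) * Real.exp (-(q k - s)^2/(2*b^2)))]
  simp_rw [gauss1d b hb]
  rw [Finset.prod_mul_distrib, Finset.prod_const, ← Real.exp_sum]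
  congr 1
  · simp [Finset.card_univ]
  · rw [← Finset.sum_div, ← Finset.sum_neg_distrib]

lemma gaussNd_integrable (N : ℕ) (b : ℝ) (hb : 0 < b) (p q : Fin N → ℝ) :
    Integrable (fun m : Fin N → ℝ => (∏ k, Real.exp (-(p k - m k)^2/(2*b^2)))
        * (∏ k, Real.exp (-(q k - m k)^2/(2*b^2)))) := by
  have : ∀ m : Fin N → ℝ, (∏ k, Real.exp (-(p k - m k)^2/(2*b^2)))
        * (∏ k, Real.exp (-(q k - m k)^2/(2*b^2)))
      = ∏ k, (Real.exp (-(p k - m k)^2/(2*b^2)) * Real.exp (-(q k - m k)^2/(2*b^2))) := by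
    intro m; rw [Finset.prod_mul_distrib]
  simp_rw [this]
  exact Integrable.fintype_prod (f := fun k s => Real.exp (-(p k - s)^2/(2*b^2))
    * Real.exp (-(q k - s)^2/(2*b^2))) (fun k => gauss1d_integrable b hb _ _)

lemma inner_int (N M L : ℕ) (b : ℝ) (hb : 0 < b) (y : Fin M → Fin N → ℝ)
    (wy : Fin M → ℝ) (wx : Fin L → ℝ) (xs : Fin L → Fin N → ℝ) :
    ∫ m : Fin N → ℝ,
        ((∑ i, wy i * ∏ k, Real.exp (-(y i k - m k) ^ 2 / (2 * b ^ 2)))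
          - ∑ i, wx i * ∏ k, Real.exp (-(xs i k - m k) ^ 2 / (2 * b ^ 2))) ^ 2
      = (∑ i, ∑ j, wy i * wy j *
            ((Real.sqrt π * b)^N * Real.exp (-(∑ k, (y i k - y j k)^2)/(4*b^2))))
        - ∑ i, 2 * ∑ j, wy i * wx j *
            ((Real.sqrt π * b)^N * Real.exp (-(∑ k, (y i k - xs j k)^2)/(4*b^2)))
        + ∑ i, ∑ j, wx i * wx j *
            ((Real.sqrt π * b)^N * Real.exp (-(∑ k, (xs i k - xs j k)^2)/(4*b^2))) := by
  set P : Fin M → (Fin N → ℝ) → ℝ :=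
    fun i m => ∏ k, Real.exp (-(y i k - m k) ^ 2 / (2 * b ^ 2)) with hP
  set Q : Fin L → (Fin N → ℝ) → ℝ :=
    fun i m => ∏ k, Real.exp (-(xs i k - m k) ^ 2 / (2 * b ^ 2)) with hQ
  have key : ∀ m : Fin N → ℝ,
      ((∑ i, wy i * P i m) - ∑ i, wx i * Q i m) ^ 2
        = (∑ i, ∑ j, wy i * wy j * (P i m * P j m))
          - 2 * (∑ i, ∑ j, wy i * wx j * (P i m * Q j m))
          + ∑ i, ∑ j, wx i * wx j * (Q i m * Q j m) := by
    intro m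
    rw [sub_sq]
    congr 1
    · congr 1
      · rw [sq, Finset.sum_mul_sum]
        exact Finset.sum_congr rfl fun i _ => Finset.sum_congr rfl fun j _ => by ring
      · rw [mul_assoc, Finset.sum_mul_sum]
        congr 1
        exact Finset.sum_congr rfl fun i _ => Finset.sum_congr rfl fun j _ => by ring
    · rw [sq, Finset.sum_mul_sum]
      exact Finset.sum_congr rfl fun i _ => Finset.sum_congr rfl fun j _ => by ring
  refine (integral_congr_ae (μ := volume) (Filter.Eventually.of_forall key)).trans ?_
  have hPP : ∀ (i j : Fin M), Integrable (fun m => wy i * wy j * (P i m * P j m)) :=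
    fun i j => (gaussNd_integrable N b hb (y i) (y j)).const_mul _
  have hPQ : ∀ (i : Fin M) (j : Fin L), Integrable (fun m => wy i * wx j * (P i m * Q j m)) :=
    fun i j => (gaussNd_integrable N b hb (y i) (xs j)).const_mul _
  have hQQ : ∀ (i j : Fin L), Integrable (fun m => wx i * wx j * (Q i m * Q j m)) :=
    fun i j => (gaussNd_integrable N b hb (xs i) (xs j)).const_mul _
  have int1 : Integrable (fun m => ∑ i, ∑ j, wy i * wy j * (P i m * P j m)) :=
    integrable_finset_sum _ fun i _ => integrable_finset_sum _ fun j _ => hPP i j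
  have int2 : Integrable (fun m => ∑ i, ∑ j, wy i * wx j * (P i m * Q j m)) :=
    integrable_finset_sum _ fun i _ => integrable_finset_sum _ fun j _ => hPQ i j
  have int3 : Integrable (fun m => ∑ i, ∑ j, wx i * wx j * (Q i m * Q j m)) :=
    integrable_finset_sum _ fun i _ => integrable_finset_sum _ fun j _ => hQQ i j
  rw [integral_add
      (f := fun m => (∑ i, ∑ j, wy i * wy j * (P i m * P j m))
        - 2 * ∑ i, ∑ j, wy i * wx j * (P i m * Q j m))
      (g := fun m => ∑ i, ∑ j, wx i * wx j * (Q i m * Q j m))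
      (int1.sub (int2.const_mul 2)) int3,
    integral_sub (f := fun m => ∑ i, ∑ j, wy i * wy j * (P i m * P j m))
      (g := fun m => 2 * ∑ i, ∑ j, wy i * wx j * (P i m * Q j m))
      int1 (int2.const_mul 2), integral_finset_sum _ (fun i _ =>
      integrable_finset_sum _ fun j _ => hPP i j),
    integral_const_mul, integral_finset_sum _ (fun i _ =>
      integrable_finset_sum _ fun j _ => hPQ i j),
    integral_finset_sum _ (fun i _ => integrable_finset_sum _ fun j _ => hQQ i j)]
  simp_rw [integral_finset_sum _ (fun j _ => hPP _ j),
    integral_finset_sum _ (fun j _ => hPQ _ j), integral_finset_sum _ (fun j _ => hQQ _ j),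
    integral_const_mul, hP, hQ, gaussNd N b hb, Finset.mul_sum]




lemma expInt_integrableOn {a : ℝ} (ha : 0 < a) :
    IntegrableOn (fun t : ℝ => Real.exp (-t) / t) (Set.Ioi a) := by
  refine Integrable.mono' ((exp_neg_integrableOn_Ioi a one_pos).div_const a) ?_ ?_
  · refine (ContinuousOn.aestronglyMeasurable ?_ measurableSet_Ioi)
    refine ContinuousOn.div (Continuous.continuousOn (by continuity)) continuousOn_id ?_
    intro t ht; exact ne_of_gt (lt_trans ha ht)
  · filter_upwards [ae_restrict_mem measurableSet_Ioi] with t ht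
    rw [Real.norm_eq_abs, abs_div, abs_of_pos (Real.exp_pos _), abs_of_pos (lt_trans ha ht),
      neg_mul, one_mul]
    gcongr
    exact le_of_lt ht

lemma negEi_abs_le {z : ℝ} (hz : 0 < z) : |negEi z| ≤ Real.exp (-z) / z := by
  rw [negEi, abs_neg, ← Real.norm_eq_abs]
  have h1 : ∫ t in Set.Ioi z, ‖Real.exp (-t) / t‖ ≤ ∫ t in Set.Ioi z, Real.exp (-t) / z := by
    refine setIntegral_mono_on (expInt_integrableOn hz).norm
      (by simpa [IntegrableOn] using (exp_neg_integrableOn_Ioi z one_pos).div_const z) measurableSet_Ioi ?_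
    intro t ht
    rw [Real.norm_eq_abs, abs_div, abs_of_pos (Real.exp_pos _), abs_of_pos (lt_trans hz ht)]
    gcongr
    exact le_of_lt ht
  refine le_trans (norm_integral_le_integral_norm _) (h1.trans_eq ?_)
  rw [integral_div, integral_exp_neg_Ioi]

lemma negEi_hasDerivAt {z : ℝ} (hz : 0 < z) :
    HasDerivAt negEi (Real.exp (-z) / z) z := by
  set a := z / 2 with ha
  have haz : a < z := by rw [ha]; linarith
  have ha0 : 0 < a := by positivity
  have hsplit : ∀ w : ℝ, a < w →
      negEi w = (∫ t in a..w, Real.exp (-t) / t) - ∫ t in Set.Ioi a, Real.exp (-t) / t := by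
    intro w hw
    have key : (∫ t in Set.Ioc a w, Real.exp (-t) / t) + ∫ t in Set.Ioi w, Real.exp (-t) / t
        = ∫ t in Set.Ioi a, Real.exp (-t) / t := by
      rw [← setIntegral_union (Set.Ioc_disjoint_Ioi le_rfl) measurableSet_Ioi
        ((expInt_integrableOn ha0).mono_set Set.Ioc_subset_Ioi_self)
        ((expInt_integrableOn ha0).mono_set (Set.Ioi_subset_Ioi hw.le)),
        Set.Ioc_union_Ioi_eq_Ioi hw.le]
    rw [negEi, intervalIntegral.integral_of_le hw.le]
    have : (∫ t in Set.Ioi w, Real.exp (-t) / t)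
        = (∫ t in Set.Ioi a, Real.exp (-t) / t) - ∫ t in Set.Ioc a w, Real.exp (-t) / t := by
      linarith [key]
    rw [this]; ring
  have hii : IntervalIntegrable (fun t => Real.exp (-t) / t) volume a z := by
    rw [intervalIntegrable_iff_integrableOn_Ioc_of_le haz.le]
    exact (expInt_integrableOn ha0).mono_set Set.Ioc_subset_Ioi_self
  have hcont : ContinuousAt (fun t : ℝ => Real.exp (-t) / t) z := by
    refine ContinuousAt.div (by fun_prop) continuousAt_id (ne_of_gt hz)
  have hmeas : StronglyMeasurableAtFilter (fun t : ℝ => Real.exp (-t) / t) (nhds z) := by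
    refine ContinuousAt.stronglyMeasurableAtFilter (s := Set.Ioi 0) isOpen_Ioi ?_ z hz
    intro w hw
    exact ContinuousAt.div (by fun_prop) continuousAt_id (ne_of_gt hw)
  have h := (intervalIntegral.integral_hasDerivAt_right (f := fun t => Real.exp (-t) / t)
    (a := a) (b := z) hii hmeas hcont).sub_const (∫ t in Set.Ioi a, Real.exp (-t) / t)
  refine HasDerivAt.congr_of_eventuallyEq h ?_
  filter_upwards [eventually_gt_nhds haz] with w hw
  exact hsplit w hw

noncomputable def phiI (bmax c : ℝ) : ℝ := ∫ b in Set.Ioc (0:ℝ) bmax, b * Real.exp (-c/(4*b^2))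

noncomputable def Gc (c : ℝ) (b : ℝ) : ℝ :=
  if b ≤ 0 then 0 else b^2/2 * Real.exp (-c/(4*b^2)) + c/8 * negEi (c/(4*b^2))

lemma inner_hasDerivAt (c : ℝ) {b : ℝ} (hb : b ≠ 0) :
    HasDerivAt (fun w : ℝ => -c/(4*w^2)) (c/(2*b^3)) b := by
  have h1 : HasDerivAt (fun w : ℝ => 4*w^2) (4*(2*b)) b := by
    simpa using ((hasDerivAt_pow 2 b).const_mul 4)
  have h2 := (hasDerivAt_const b (-c)).div h1 (by positivity)
  refine h2.congr_deriv (Eq.symm ?_)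
  field_simp
  ring

lemma Gc_hasDerivAt {c : ℝ} (hc : 0 < c) {b : ℝ} (hb : 0 < b) :
    HasDerivAt (Gc c) (b * Real.exp (-c/(4*b^2))) b := by
  have hz : 0 < c/(4*b^2) := by positivity
  have h1 := inner_hasDerivAt c hb.ne'
  have h1' : HasDerivAt (fun w : ℝ => c/(4*w^2)) (-(c/(2*b^3))) b := by
    have := (inner_hasDerivAt c hb.ne').fun_neg
    simpa [neg_div, neg_neg] using this
  have h2 : HasDerivAt (fun w : ℝ => Real.exp (-c/(4*w^2)))
      (Real.exp (-c/(4*b^2)) * (c/(2*b^3))) b := h1.exp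
  have hA : HasDerivAt (fun w : ℝ => w^2/2 * Real.exp (-c/(4*w^2)))
      (b * Real.exp (-c/(4*b^2)) + b^2/2 * (Real.exp (-c/(4*b^2)) * (c/(2*b^3)))) b := by
    have hu : HasDerivAt (fun w : ℝ => w^2/2) b b := by
      simpa using (hasDerivAt_pow 2 b).div_const 2
    exact hu.fun_mul h2
  have h4 : HasDerivAt (fun w : ℝ => negEi (c/(4*w^2)))
      (Real.exp (-(c/(4*b^2))) / (c/(4*b^2)) * (-(c/(2*b^3)))) b :=
    by have := (negEi_hasDerivAt hz).comp b h1'; exact this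
  have hB := h4.const_mul (c/8)
  have htot := hA.fun_add hB
  have : HasDerivAt (fun w : ℝ => w^2/2 * Real.exp (-c/(4*w^2)) + c/8 * negEi (c/(4*w^2)))
      (b * Real.exp (-c/(4*b^2))) b := by
    refine htot.congr_deriv (Eq.symm ?_)
    have hb3 : b^3 ≠ 0 := by positivity
    rw [neg_div]
    field_simp
    ring
  refine this.congr_of_eventuallyEq ?_
  filter_upwards [eventually_gt_nhds hb] with w hw
  rw [Gc, if_neg (not_le.2 hw)]

lemma Gc_abs_le {c : ℝ} (hc : 0 < c) (b : ℝ) : |Gc c b| ≤ b^2 := by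
  rcases le_or_gt b 0 with h | h
  · rw [Gc, if_pos h]; simpa using sq_nonneg b
  · rw [Gc, if_neg (not_le.2 h)]
    have hz : 0 < c/(4*b^2) := by positivity
    have hE1 : Real.exp (-c/(4*b^2)) ≤ 1 := by
      rw [Real.exp_le_one_iff]
      rw [neg_div]
      simpa using le_of_lt hz
    have hE0 : 0 ≤ Real.exp (-c/(4*b^2)) := (Real.exp_pos _).le
    have h2 : |c/8 * negEi (c/(4*b^2))| ≤ b^2/2 := by
      rw [abs_mul, abs_of_pos (by positivity : (0:ℝ) < c/8)]
      calc c/8 * |negEi (c/(4*b^2))| ≤ c/8 * (Real.exp (-(c/(4*b^2))) / (c/(4*b^2))) := by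
            gcongr
            exact negEi_abs_le hz
        _ ≤ c/8 * (1 / (c/(4*b^2))) := by
            gcongr
            rw [Real.exp_le_one_iff]; simpa using le_of_lt hz
        _ = b^2/2 := by field_simp; ring
    calc |b^2/2 * Real.exp (-c/(4*b^2)) + c/8 * negEi (c/(4*b^2))|
        ≤ |b^2/2 * Real.exp (-c/(4*b^2))| + |c/8 * negEi (c/(4*b^2))| := abs_add_le _ _
      _ ≤ b^2/2 + b^2/2 := by
          refine add_le_add ?_ h2
          rw [abs_mul, abs_of_pos (by positivity : (0:ℝ) < b^2/2),
            abs_of_pos (Real.exp_pos _)]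
          nlinarith
      _ = b^2 := by ring

lemma phi_integrand_integrableOn {bmax : ℝ} (hb : 0 < bmax) {c : ℝ} (hc : 0 ≤ c) :
    IntegrableOn (fun b : ℝ => b * Real.exp (-c/(4*b^2))) (Set.Ioc (0:ℝ) bmax) := by
  refine Measure.integrableOn_of_bounded (M := bmax) measure_Ioc_lt_top.ne ?_ ?_
  · refine (Measurable.aestronglyMeasurable ?_)
    exact measurable_id.mul ((measurable_const.div (by measurability)).exp)
  · filter_upwards [ae_restrict_mem measurableSet_Ioc] with b hbm
    rw [Real.norm_eq_abs, abs_mul, abs_of_pos hbm.1, abs_of_pos (Real.exp_pos _)]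
    have hE : Real.exp (-c/(4*b^2)) ≤ 1 := by
      rw [Real.exp_le_one_iff, neg_div]
      exact neg_nonpos.mpr (by positivity)
    calc b * Real.exp (-c/(4*b^2)) ≤ b * 1 := mul_le_mul_of_nonneg_left hE hbm.1.le
      _ ≤ bmax := by rw [mul_one]; exact hbm.2

lemma phi_eq {bmax : ℝ} (hb : 0 < bmax) {c : ℝ} (hc : 0 < c) :
    phiI bmax c = bmax^2/2 * Real.exp (-c/(4*bmax^2)) + c/8 * negEi (c/(4*bmax^2)) := by
  have hcont : ContinuousOn (Gc c) (Set.Icc 0 bmax) := by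
    intro w hw
    rcases eq_or_lt_of_le hw.1 with h | h
    · subst h
      have hb0 : Gc c 0 = 0 := by rw [Gc, if_pos le_rfl]
      have htend : Filter.Tendsto (Gc c) (nhdsWithin 0 (Set.Icc 0 bmax)) (nhds 0) := by
        refine squeeze_zero_norm' (a := fun w : ℝ => w^2) ?_ ?_
        · exact Filter.Eventually.of_forall
            (fun w => by simpa [Real.norm_eq_abs] using Gc_abs_le hc w)
        · have h2 : Filter.Tendsto (fun w : ℝ => w^2) (nhds (0:ℝ)) (nhds 0) := by
            simpa using (continuous_pow 2).tendsto (0:ℝ)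
          exact h2.mono_left nhdsWithin_le_nhds
      show Filter.Tendsto (Gc c) (nhdsWithin 0 (Set.Icc 0 bmax)) (nhds (Gc c 0))
      rw [hb0]
      exact htend
    · exact ((Gc_hasDerivAt hc h).continuousAt).continuousWithinAt
  have hderiv : ∀ w ∈ Set.Ioo 0 bmax,
      HasDerivWithinAt (Gc c) (w * Real.exp (-c/(4*w^2))) (Set.Ioi w) w :=
    fun w hw => (Gc_hasDerivAt hc hw.1).hasDerivWithinAt
  have hii : IntervalIntegrable (fun b : ℝ => b * Real.exp (-c/(4*b^2))) volume 0 bmax := by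
    rw [intervalIntegrable_iff_integrableOn_Ioc_of_le hb.le]
    exact phi_integrand_integrableOn hb hc.le
  have := intervalIntegral.integral_eq_sub_of_hasDeriv_right_of_le hb.le hcont hderiv hii
  rw [phiI, ← intervalIntegral.integral_of_le hb.le, this, Gc, if_neg (not_le.2 hb), Gc, if_pos le_rfl, sub_zero]

lemma phiI_hasDerivAt {bmax : ℝ} (hb : 0 < bmax) {c : ℝ} (hc : 0 < c) :
    HasDerivAt (phiI bmax) ((1/8) * negEi (c/(4*bmax^2))) c := by
  have hz : 0 < c/(4*bmax^2) := by positivity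
  have h1 : HasDerivAt (fun w : ℝ => -w/(4*bmax^2)) (-(1/(4*bmax^2))) c := by
    have := ((hasDerivAt_id c).div_const (4*bmax^2)).fun_neg
    simpa only [neg_div, one_div, id] using this
  have h1' : HasDerivAt (fun w : ℝ => w/(4*bmax^2)) (1/(4*bmax^2)) c := by
    have := (hasDerivAt_id c).div_const (4*bmax^2)
    simpa only [one_div, id] using this
  have h2 : HasDerivAt (fun w : ℝ => bmax^2/2 * Real.exp (-w/(4*bmax^2)))
      (bmax^2/2 * (Real.exp (-c/(4*bmax^2)) * -(1/(4*bmax^2)))) c := (h1.exp).const_mul _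
  have h3 : HasDerivAt (fun w : ℝ => negEi (w/(4*bmax^2)))
      (Real.exp (-(c/(4*bmax^2))) / (c/(4*bmax^2)) * (1/(4*bmax^2))) c :=
    by have := (negEi_hasDerivAt hz).comp c h1'; exact this
  have h4 : HasDerivAt (fun w : ℝ => w/8 * negEi (w/(4*bmax^2)))
      (1/8 * negEi (c/(4*bmax^2))
        + c/8 * (Real.exp (-(c/(4*bmax^2))) / (c/(4*bmax^2)) * (1/(4*bmax^2)))) c := by
    have hu : HasDerivAt (fun w : ℝ => w/8) (1/8) c := by
      simpa using (hasDerivAt_id c).div_const 8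
    simpa using hu.fun_mul h3
  have htot := h2.fun_add h4
  have key : HasDerivAt (fun w : ℝ => bmax^2/2 * Real.exp (-w/(4*bmax^2))
      + w/8 * negEi (w/(4*bmax^2))) ((1/8) * negEi (c/(4*bmax^2))) c := by
    refine htot.congr_deriv (Eq.symm ?_)
    have hbm : bmax^2 ≠ 0 := by positivity
    have hc' : c ≠ 0 := hc.ne'
    rw [neg_div]
    field_simp
    ring
  refine key.congr_of_eventuallyEq ?_ |>.congr_deriv rfl
  filter_upwards [eventually_gt_nhds hc] with w hw
  rw [phi_eq hb hw]

lemma pow_fact {N : ℕ} (hN : 1 ≤ N) {b : ℝ} (hb : 0 < b) (c E : ℝ) :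
    (1/b^(N-1)) * (c * ((Real.sqrt π * b)^N * E)) = c * (Real.sqrt π^N * (b * E)) := by
  have hNe : N - 1 + 1 = N := Nat.succ_pred_eq_of_pos hN
  have hpow : b ^ N = b ^ (N-1) * b := by rw [← pow_succ, hNe]
  have hbn : b^(N-1) ≠ 0 := by positivity
  rw [mul_pow, hpow]
  field_simp

lemma D_eq (N M L : ℕ) (hN : 1 ≤ N) (bmax : ℝ) (hb : 0 < bmax)
    (y : Fin M → Fin N → ℝ) (wy : Fin M → ℝ) (wx : Fin L → ℝ)
    (xs : Fin L → Fin N → ℝ) :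
    (∫ b in Set.Ioc (0:ℝ) bmax, (1 / b ^ (N - 1)) *
        ∫ m : Fin N → ℝ,
          ((∑ i, wy i * ∏ k, Real.exp (-(y i k - m k) ^ 2 / (2 * b ^ 2)))
            - ∑ i, wx i * ∏ k, Real.exp (-(xs i k - m k) ^ 2 / (2 * b ^ 2))) ^ 2)
      = (∑ i, ∑ j, wy i * wy j * (Real.sqrt π ^ N * phiI bmax (∑ k, (y i k - y j k)^2)))
        - ∑ i, 2 * ∑ j, wy i * wx j * (Real.sqrt π ^ N * phiI bmax (∑ k, (y i k - xs j k)^2))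
        + ∑ i, ∑ j, wx i * wx j * (Real.sqrt π ^ N * phiI bmax (∑ k, (xs i k - xs j k)^2)) := by
  have hcong : ∀ b ∈ Set.Ioc (0:ℝ) bmax, ((1 : ℝ) / b ^ (N - 1)) *
        (∫ m : Fin N → ℝ,
          ((∑ i, wy i * ∏ k, Real.exp (-(y i k - m k) ^ 2 / (2 * b ^ 2)))
            - ∑ i, wx i * ∏ k, Real.exp (-(xs i k - m k) ^ 2 / (2 * b ^ 2))) ^ 2)
      = (∑ i, ∑ j, wy i * wy j *
            (Real.sqrt π ^ N * (b * Real.exp (-(∑ k, (y i k - y j k)^2)/(4*b^2)))))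
        - ∑ i, 2 * ∑ j, wy i * wx j *
            (Real.sqrt π ^ N * (b * Real.exp (-(∑ k, (y i k - xs j k)^2)/(4*b^2))))
        + ∑ i, ∑ j, wx i * wx j *
            (Real.sqrt π ^ N * (b * Real.exp (-(∑ k, (xs i k - xs j k)^2)/(4*b^2)))) := by
    intro b hbm
    rw [inner_int N M L b hbm.1 y wy wx xs, mul_add, mul_sub]
    congr 1
    · congr 1
      · rw [Finset.mul_sum]
        refine Finset.sum_congr rfl fun i _ => ?_
        rw [Finset.mul_sum]
        exact Finset.sum_congr rfl fun j _ => pow_fact hN hbm.1 _ _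
      · rw [Finset.mul_sum]
        refine Finset.sum_congr rfl fun i _ => ?_
        rw [mul_left_comm, Finset.mul_sum]
        congr 1
        exact Finset.sum_congr rfl fun j _ => pow_fact hN hbm.1 _ _
    · rw [Finset.mul_sum]
      refine Finset.sum_congr rfl fun i _ => ?_
      rw [Finset.mul_sum]
      exact Finset.sum_congr rfl fun j _ => pow_fact hN hbm.1 _ _
  rw [setIntegral_congr_fun measurableSet_Ioc hcong]
  have hint : ∀ (q : ℝ), 0 ≤ q → ∀ (c : ℝ), IntegrableOn
      (fun b : ℝ => c * (Real.sqrt π ^ N * (b * Real.exp (-q/(4*b^2))))) (Set.Ioc (0:ℝ) bmax) := by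
    intro q hq c
    exact (((phi_integrand_integrableOn hb hq).const_mul (Real.sqrt π ^ N)).const_mul c)
  have sqnn : ∀ (f g : Fin N → ℝ), (0:ℝ) ≤ ∑ k, (f k - g k)^2 :=
    fun f g => Finset.sum_nonneg fun k _ => sq_nonneg _
  have intYY : ∀ (i j : Fin M), IntegrableOn (fun b : ℝ => wy i * wy j *
      (Real.sqrt π ^ N * (b * Real.exp (-(∑ k, (y i k - y j k)^2)/(4*b^2))))) (Set.Ioc (0:ℝ) bmax) :=
    fun i j => hint _ (sqnn _ _) _
  have intYX : ∀ (i : Fin M) (j : Fin L), IntegrableOn (fun b : ℝ => wy i * wx j *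
      (Real.sqrt π ^ N * (b * Real.exp (-(∑ k, (y i k - xs j k)^2)/(4*b^2))))) (Set.Ioc (0:ℝ) bmax) :=
    fun i j => hint _ (sqnn _ _) _
  have intXX : ∀ (i j : Fin L), IntegrableOn (fun b : ℝ => wx i * wx j *
      (Real.sqrt π ^ N * (b * Real.exp (-(∑ k, (xs i k - xs j k)^2)/(4*b^2))))) (Set.Ioc (0:ℝ) bmax) :=
    fun i j => hint _ (sqnn _ _) _
  have int1 : IntegrableOn (fun b : ℝ => ∑ i, ∑ j, wy i * wy j *
      (Real.sqrt π ^ N * (b * Real.exp (-(∑ k, (y i k - y j k)^2)/(4*b^2))))) (Set.Ioc (0:ℝ) bmax) :=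
    integrable_finset_sum _ fun i _ => integrable_finset_sum _ fun j _ => intYY i j
  have int2 : IntegrableOn (fun b : ℝ => ∑ i, 2 * ∑ j, wy i * wx j *
      (Real.sqrt π ^ N * (b * Real.exp (-(∑ k, (y i k - xs j k)^2)/(4*b^2))))) (Set.Ioc (0:ℝ) bmax) :=
    integrable_finset_sum _ fun i _ =>
      (integrable_finset_sum _ fun j _ => intYX i j).const_mul 2
  have int3 : IntegrableOn (fun b : ℝ => ∑ i, ∑ j, wx i * wx j *
      (Real.sqrt π ^ N * (b * Real.exp (-(∑ k, (xs i k - xs j k)^2)/(4*b^2))))) (Set.Ioc (0:ℝ) bmax) :=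
    integrable_finset_sum _ fun i _ => integrable_finset_sum _ fun j _ => intXX i j
  rw [integral_add
      (f := fun b => (∑ i, ∑ j, wy i * wy j *
          (Real.sqrt π ^ N * (b * Real.exp (-(∑ k, (y i k - y j k)^2)/(4*b^2)))))
        - ∑ i, 2 * ∑ j, wy i * wx j *
          (Real.sqrt π ^ N * (b * Real.exp (-(∑ k, (y i k - xs j k)^2)/(4*b^2)))))
      (g := fun b => ∑ i, ∑ j, wx i * wx j *
          (Real.sqrt π ^ N * (b * Real.exp (-(∑ k, (xs i k - xs j k)^2)/(4*b^2)))))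
      (int1.sub int2) int3,
    integral_sub
      (f := fun b => ∑ i, ∑ j, wy i * wy j *
          (Real.sqrt π ^ N * (b * Real.exp (-(∑ k, (y i k - y j k)^2)/(4*b^2)))))
      (g := fun b => ∑ i, 2 * ∑ j, wy i * wx j *
          (Real.sqrt π ^ N * (b * Real.exp (-(∑ k, (y i k - xs j k)^2)/(4*b^2)))))
      int1 int2,
    integral_finset_sum _ (fun i _ => integrable_finset_sum _ fun j _ => intYY i j),
    integral_finset_sum _ (fun i _ =>
      (integrable_finset_sum _ fun j _ => intYX i j).const_mul 2),
    integral_finset_sum _ (fun i _ => integrable_finset_sum _ fun j _ => intXX i j)]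
  congr 1
  · congr 1
    · refine Finset.sum_congr rfl fun i _ => ?_
      rw [integral_finset_sum _ (fun j _ => intYY i j)]
      refine Finset.sum_congr rfl fun j _ => ?_
      rw [integral_const_mul, integral_const_mul]
      rfl
    · refine Finset.sum_congr rfl fun i _ => ?_
      rw [integral_const_mul, integral_finset_sum _ (fun j _ => intYX i j)]
      congr 1
      refine Finset.sum_congr rfl fun j _ => ?_
      rw [integral_const_mul, integral_const_mul]
      rfl
  · refine Finset.sum_congr rfl fun i _ => ?_
    rw [integral_finset_sum _ (fun j _ => intXX i j)]
    refine Finset.sum_congr rfl fun j _ => ?_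
    rw [integral_const_mul, integral_const_mul]
    rfl

theorem necessary_conditions_at_optimum
    (N M L : ℕ) (hN : 1 ≤ N) (bmax : ℝ) (hb : 0 < bmax)
    (y : Fin M → Fin N → ℝ) (wy : Fin M → ℝ) (hwy : ∀ i, 0 < wy i)
    (wx : Fin L → ℝ) (hwx : ∀ i, 0 < wx i)
    (x : Fin L → Fin N → ℝ)
    (hmin : IsLocalMin (fun xs : Fin L → Fin N → ℝ =>
      ∫ b in Set.Ioc (0:ℝ) bmax, (1 / b ^ (N - 1)) *
        ∫ m : Fin N → ℝ,
          ((∑ i, wy i * ∏ k, Real.exp (-(y i k - m k) ^ 2 / (2 * b ^ 2)))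
            - ∑ i, wx i * ∏ k, Real.exp (-(xs i k - m k) ^ 2 / (2 * b ^ 2))) ^ 2) x)
    (hxy : ∀ (ξ : Fin L) (i : Fin M), x ξ ≠ y i)
    (hxx : ∀ (ξ i : Fin L), ξ ≠ i → x ξ ≠ x i) :
    ∀ (ξ : Fin L) (η : Fin N),
      (∑ i, wx i * (x ξ η - x i η) * negEi ((∑ k, (x ξ k - x i k) ^ 2) / (4 * bmax ^ 2)))
        = ∑ i, wy i * (x ξ η - y i η) * negEi ((∑ k, (x ξ k - y i k) ^ 2) / (4 * bmax ^ 2)) := by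
  intro ξ η
  classical
  set K : ℝ := Real.sqrt π ^ N with hK
  have hKpos : 0 < K := pow_pos (Real.sqrt_pos.2 pi_pos) N
  set u : ℝ → Fin L → Fin N → ℝ :=
    fun t i k => if i = ξ ∧ k = η then t else x i k with hu
  have hu0 : u (x ξ η) = x := by
    funext i k
    simp only [hu]
    split_ifs with h
    · rw [h.1, h.2]
    · rfl
  have hucont : Continuous u := by
    refine continuous_pi fun i => continuous_pi fun k => ?_
    by_cases h : i = ξ ∧ k = η
    · simp [hu, h]; exact continuous_id'
    · simpa [hu, h] using (continuous_const : Continuous fun _ : ℝ => x i k)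
  -- local min of the composed 1-D function
  have h1 : IsLocalMin ((fun xs : Fin L → Fin N → ℝ =>
      ∫ b in Set.Ioc (0:ℝ) bmax, (1 / b ^ (N - 1)) *
        ∫ m : Fin N → ℝ,
          ((∑ i, wy i * ∏ k, Real.exp (-(y i k - m k) ^ 2 / (2 * b ^ 2)))
            - ∑ i, wx i * ∏ k, Real.exp (-(xs i k - m k) ^ 2 / (2 * b ^ 2))) ^ 2) ∘ u)
      (x ξ η) := by
    refine IsLocalMin.comp_continuous ?_ hucont.continuousAt
    rw [hu0]
    exact hmin
  have hGeq : ((fun xs : Fin L → Fin N → ℝ =>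
      ∫ b in Set.Ioc (0:ℝ) bmax, (1 / b ^ (N - 1)) *
        ∫ m : Fin N → ℝ,
          ((∑ i, wy i * ∏ k, Real.exp (-(y i k - m k) ^ 2 / (2 * b ^ 2)))
            - ∑ i, wx i * ∏ k, Real.exp (-(xs i k - m k) ^ 2 / (2 * b ^ 2))) ^ 2) ∘ u)
      = fun t : ℝ =>
        (∑ i, ∑ j, wy i * wy j * (K * phiI bmax (∑ k, (y i k - y j k)^2)))
        - ∑ i, 2 * ∑ j, wy i * wx j * (K * phiI bmax (∑ k, (y i k - u t j k)^2))
        + ∑ i, ∑ j, wx i * wx j * (K * phiI bmax (∑ k, (u t i k - u t j k)^2)) :=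
    funext fun t => D_eq N M L hN bmax hb y wy wx (u t)
  rw [hGeq] at h1
  -- auxiliary facts about the deformation
  have huξη : ∀ t, u t ξ η = t := fun t => by simp [hu]
  have huξk : ∀ t k, k ≠ η → u t ξ k = x ξ k := by
    intro t k hk
    simp only [hu]
    rw [if_neg (fun h => hk h.2)]
  have hconstj : ∀ j, j ≠ ξ → ∀ t k, u t j k = x j k := by
    intro j hj t k
    simp only [hu]
    rw [if_neg (fun h => hj h.1)]
  have hsum1 : ∀ (p : Fin N → ℝ) (t : ℝ), (∑ k, (p k - u t ξ k)^2)
      = (p η - t)^2 + ∑ k ∈ Finset.univ.erase η, (p k - x ξ k)^2 := by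
    intro p t
    rw [← Finset.add_sum_erase Finset.univ (fun k => (p k - u t ξ k)^2) (Finset.mem_univ η)]
    congr 1
    · rw [huξη t]
    · refine Finset.sum_congr rfl fun k hk => ?_
      rw [huξk t k (Finset.ne_of_mem_erase hk)]
  have hsum2 : ∀ (p : Fin N → ℝ) (t : ℝ), (∑ k, (u t ξ k - p k)^2)
      = (t - p η)^2 + ∑ k ∈ Finset.univ.erase η, (x ξ k - p k)^2 := by
    intro p t
    rw [← Finset.add_sum_erase Finset.univ (fun k => (u t ξ k - p k)^2) (Finset.mem_univ η)]
    congr 1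
    · rw [huξη t]
    · refine Finset.sum_congr rfl fun k hk => ?_
      rw [huξk t k (Finset.ne_of_mem_erase hk)]
  -- derivative of the two basic moving terms
  have hder1 : ∀ (a s : ℝ), HasDerivAt (fun t : ℝ => (a - t)^2 + s) (2*(x ξ η - a)) (x ξ η) := by
    intro a s
    have h := (((hasDerivAt_id (x ξ η)).const_sub a).fun_pow 2).add_const s
    refine h.congr_deriv (Eq.symm ?_)
    simp only [pow_one, id]
    ring
  have hder2 : ∀ (a s : ℝ), HasDerivAt (fun t : ℝ => (t - a)^2 + s) (2*(x ξ η - a)) (x ξ η) := by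
    intro a s
    have h := (((hasDerivAt_id (x ξ η)).sub_const a).fun_pow 2).add_const s
    refine h.congr_deriv (Eq.symm ?_)
    simp only [pow_one, id]
    ring
  have hphi1 : ∀ (p : Fin N → ℝ), 0 < (∑ k, (p k - x ξ k)^2) →
      HasDerivAt (fun t => phiI bmax (∑ k, (p k - u t ξ k)^2))
        ((1/8) * negEi ((∑ k, (p k - x ξ k)^2)/(4*bmax^2)) * (2*(x ξ η - p η))) (x ξ η) := by
    intro p hp
    have hfun : (fun t => phiI bmax (∑ k, (p k - u t ξ k)^2))
        = (fun t => phiI bmax ((p η - t)^2 + ∑ k ∈ Finset.univ.erase η, (p k - x ξ k)^2)) :=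
      funext fun t => by rw [hsum1 p t]
    rw [hfun]
    have hq0 : (p η - x ξ η)^2 + (∑ k ∈ Finset.univ.erase η, (p k - x ξ k)^2)
        = ∑ k, (p k - x ξ k)^2 := by
      have h := hsum1 p (x ξ η)
      rw [hu0] at h
      exact h.symm
    have hpos : 0 < (p η - x ξ η)^2 + ∑ k ∈ Finset.univ.erase η, (p k - x ξ k)^2 := by
      rw [hq0]; exact hp
    have h := (phiI_hasDerivAt hb hpos).comp (x ξ η) (hder1 (p η) _)
    rw [hq0] at h
    simpa [Function.comp_def] using h
  have hphi2 : ∀ (p : Fin N → ℝ), 0 < (∑ k, (x ξ k - p k)^2) →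
      HasDerivAt (fun t => phiI bmax (∑ k, (u t ξ k - p k)^2))
        ((1/8) * negEi ((∑ k, (x ξ k - p k)^2)/(4*bmax^2)) * (2*(x ξ η - p η))) (x ξ η) := by
    intro p hp
    have hfun : (fun t => phiI bmax (∑ k, (u t ξ k - p k)^2))
        = (fun t => phiI bmax ((t - p η)^2 + ∑ k ∈ Finset.univ.erase η, (x ξ k - p k)^2)) :=
      funext fun t => by rw [hsum2 p t]
    rw [hfun]
    have hq0 : (x ξ η - p η)^2 + (∑ k ∈ Finset.univ.erase η, (x ξ k - p k)^2)
        = ∑ k, (x ξ k - p k)^2 := by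
      have h := hsum2 p (x ξ η)
      rw [hu0] at h
      exact h.symm
    have hpos : 0 < (x ξ η - p η)^2 + ∑ k ∈ Finset.univ.erase η, (x ξ k - p k)^2 := by
      rw [hq0]; exact hp
    have h := (phiI_hasDerivAt hb hpos).comp (x ξ η) (hder2 (p η) _)
    rw [hq0] at h
    simpa [Function.comp_def] using h
  -- positivity of the relevant squared distances
  have hposxy : ∀ i : Fin M, 0 < ∑ k, (y i k - x ξ k)^2 := by
    intro i
    obtain ⟨k0, hk0⟩ := Function.ne_iff.1 (hxy ξ i)
    refine Finset.sum_pos' (fun k _ => sq_nonneg _) ⟨k0, Finset.mem_univ _, ?_⟩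
    have hne : y i k0 - x ξ k0 ≠ 0 := sub_ne_zero.2 (Ne.symm hk0)
    exact lt_of_le_of_ne (sq_nonneg _) (Ne.symm (pow_ne_zero 2 hne))
  have hposxx : ∀ j : Fin L, j ≠ ξ → 0 < ∑ k, (x ξ k - x j k)^2 := by
    intro j hj
    obtain ⟨k0, hk0⟩ := Function.ne_iff.1 (hxx ξ j (fun h => hj h.symm))
    refine Finset.sum_pos' (fun k _ => sq_nonneg _) ⟨k0, Finset.mem_univ _, ?_⟩
    have hne : x ξ k0 - x j k0 ≠ 0 := sub_ne_zero.2 hk0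
    exact lt_of_le_of_ne (sq_nonneg _) (Ne.symm (pow_ne_zero 2 hne))
  have hposxx' : ∀ i : Fin L, i ≠ ξ → 0 < ∑ k, (x i k - x ξ k)^2 := by
    intro i hi
    have h := hposxx i hi
    have : (∑ k, (x ξ k - x i k)^2) = ∑ k, (x i k - x ξ k)^2 :=
      Finset.sum_congr rfl fun k _ => by ring
    rwa [this] at h
  -- per-term derivatives: mixed sums
  have hdyx : ∀ (i : Fin M) (j : Fin L), HasDerivAt
      (fun t => wy i * wx j * (K * phiI bmax (∑ k, (y i k - u t j k)^2)))
      (if j = ξ then wy i * wx j * (K * ((1/8) * negEi ((∑ k, (y i k - x ξ k)^2)/(4*bmax^2))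
        * (2*(x ξ η - y i η)))) else 0) (x ξ η) := by
    intro i j
    by_cases hj : j = ξ
    · rw [if_pos hj]
      have hfun : (fun t => wy i * wx j * (K * phiI bmax (∑ k, (y i k - u t j k)^2)))
          = fun t => wy i * wx j * (K * phiI bmax (∑ k, (y i k - u t ξ k)^2)) := by
        rw [hj]
      rw [hfun]
      exact (((hphi1 (y i) (hposxy i)).const_mul K).const_mul (wy i * wx j))
    · rw [if_neg hj]
      have hfun : (fun t => wy i * wx j * (K * phiI bmax (∑ k, (y i k - u t j k)^2)))
          = fun _ => wy i * wx j * (K * phiI bmax (∑ k, (y i k - x j k)^2)) := by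
        funext t
        have h : (∑ k, (y i k - u t j k)^2) = ∑ k, (y i k - x j k)^2 :=
          Finset.sum_congr rfl fun k _ => by rw [hconstj j hj t k]
        rw [h]
      rw [hfun]
      exact hasDerivAt_const _ _
  -- per-term derivatives: xx sums
  have hdxx : ∀ (i j : Fin L), HasDerivAt
      (fun t => wx i * wx j * (K * phiI bmax (∑ k, (u t i k - u t j k)^2)))
      ((if i = ξ then wx i * wx j * (K * ((1/8) * negEi ((∑ k, (x ξ k - x j k)^2)/(4*bmax^2))
          * (2*(x ξ η - x j η)))) else 0)
        + (if j = ξ then wx i * wx j * (K * ((1/8) * negEi ((∑ k, (x i k - x ξ k)^2)/(4*bmax^2))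
          * (2*(x ξ η - x i η)))) else 0)) (x ξ η) := by
    intro i j
    by_cases hi : i = ξ <;> by_cases hj : j = ξ
    · rw [if_pos hi, if_pos hj]
      have hval : (wx i * wx j * (K * ((1/8) * negEi ((∑ k, (x ξ k - x j k)^2)/(4*bmax^2))
          * (2*(x ξ η - x j η)))))
          + (wx i * wx j * (K * ((1/8) * negEi ((∑ k, (x i k - x ξ k)^2)/(4*bmax^2))
          * (2*(x ξ η - x i η))))) = 0 := by
        rw [hi, hj]
        simp
      rw [hval]
      have hfun : (fun t => wx i * wx j * (K * phiI bmax (∑ k, (u t i k - u t j k)^2)))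
          = fun _ => wx i * wx j * (K * phiI bmax 0) := by
        funext t
        have h : (∑ k : Fin N, (u t i k - u t j k)^2) = 0 := by
          rw [hi, hj]; simp
        rw [h]
      rw [hfun]
      exact hasDerivAt_const _ _
    · rw [if_pos hi, if_neg hj, add_zero]
      have hfun : (fun t => wx i * wx j * (K * phiI bmax (∑ k, (u t i k - u t j k)^2)))
          = fun t => wx i * wx j * (K * phiI bmax (∑ k, (u t ξ k - x j k)^2)) := by
        funext t
        have h : (∑ k, (u t i k - u t j k)^2) = ∑ k, (u t ξ k - x j k)^2 := by
          rw [hi]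
          exact Finset.sum_congr rfl fun k _ => by rw [hconstj j hj t k]
        rw [h]
      rw [hfun, hi]
      exact ((hphi2 (x j) (hposxx j hj)).const_mul K).const_mul (wx ξ * wx j)
    · rw [if_neg hi, if_pos hj, zero_add]
      have hfun : (fun t => wx i * wx j * (K * phiI bmax (∑ k, (u t i k - u t j k)^2)))
          = fun t => wx i * wx j * (K * phiI bmax (∑ k, (x i k - u t ξ k)^2)) := by
        funext t
        have h : (∑ k, (u t i k - u t j k)^2) = ∑ k, (x i k - u t ξ k)^2 := by
          rw [hj]
          exact Finset.sum_congr rfl fun k _ => by rw [hconstj i hi t k]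
        rw [h]
      rw [hfun, hj]
      exact ((hphi1 (x i) (hposxx' i hi)).const_mul K).const_mul (wx i * wx ξ)
    · rw [if_neg hi, if_neg hj, add_zero]
      have hfun : (fun t => wx i * wx j * (K * phiI bmax (∑ k, (u t i k - u t j k)^2)))
          = fun _ => wx i * wx j * (K * phiI bmax (∑ k, (x i k - x j k)^2)) := by
        funext t
        have h : (∑ k, (u t i k - u t j k)^2) = ∑ k, (x i k - x j k)^2 :=
          Finset.sum_congr rfl fun k _ => by rw [hconstj i hi t k, hconstj j hj t k]
        rw [h]
      rw [hfun]
      exact hasDerivAt_const _ _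
  -- total derivative
  have hMid : HasDerivAt
      (fun t => ∑ i, 2 * ∑ j, wy i * wx j * (K * phiI bmax (∑ k, (y i k - u t j k)^2)))
      (∑ i, 2 * ∑ j, (if j = ξ then wy i * wx j *
        (K * ((1/8) * negEi ((∑ k, (y i k - x ξ k)^2)/(4*bmax^2))
        * (2*(x ξ η - y i η)))) else 0)) (x ξ η) :=
    HasDerivAt.fun_sum fun i _ => (HasDerivAt.fun_sum fun j _ => hdyx i j).const_mul 2
  have hTop : HasDerivAt
      (fun t => ∑ i, ∑ j, wx i * wx j * (K * phiI bmax (∑ k, (u t i k - u t j k)^2)))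
      (∑ i, ∑ j, ((if i = ξ then wx i * wx j *
          (K * ((1/8) * negEi ((∑ k, (x ξ k - x j k)^2)/(4*bmax^2))
          * (2*(x ξ η - x j η)))) else 0)
        + (if j = ξ then wx i * wx j *
          (K * ((1/8) * negEi ((∑ k, (x i k - x ξ k)^2)/(4*bmax^2))
          * (2*(x ξ η - x i η)))) else 0))) (x ξ η) :=
    HasDerivAt.fun_sum fun i _ => HasDerivAt.fun_sum fun j _ => hdxx i j
  have htotal := ((hasDerivAt_const (x ξ η)
      (∑ i, ∑ j, wy i * wy j * (K * phiI bmax (∑ k, (y i k - y j k)^2)))).sub hMid).add hTop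
  have hzero := h1.hasDerivAt_eq_zero htotal
  -- simplify the sums
  have hDmid : (∑ i, 2 * ∑ j, (if j = ξ then wy i * wx j *
        (K * ((1/8) * negEi ((∑ k, (y i k - x ξ k)^2)/(4*bmax^2))
        * (2*(x ξ η - y i η)))) else 0))
      = (wx ξ * K / 2) * ∑ i, wy i * (x ξ η - y i η)
          * negEi ((∑ k, (x ξ k - y i k)^2)/(4*bmax^2)) := by
    rw [Finset.mul_sum]
    refine Finset.sum_congr rfl fun i _ => ?_
    rw [Finset.sum_ite_eq' Finset.univ ξ]
    simp only [Finset.mem_univ, if_true]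
    have hq : (∑ k, (y i k - x ξ k)^2) = ∑ k, (x ξ k - y i k)^2 :=
      Finset.sum_congr rfl fun k _ => by ring
    rw [hq]
    ring
  have hDtop : (∑ i, ∑ j, ((if i = ξ then wx i * wx j *
          (K * ((1/8) * negEi ((∑ k, (x ξ k - x j k)^2)/(4*bmax^2))
          * (2*(x ξ η - x j η)))) else 0)
        + (if j = ξ then wx i * wx j *
          (K * ((1/8) * negEi ((∑ k, (x i k - x ξ k)^2)/(4*bmax^2))
          * (2*(x ξ η - x i η)))) else 0)))
      = (wx ξ * K / 2) * ∑ i, wx i * (x ξ η - x i η)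
          * negEi ((∑ k, (x ξ k - x i k)^2)/(4*bmax^2)) := by
    simp_rw [Finset.sum_add_distrib]
    have hA : (∑ i, ∑ j, (if i = ξ then wx i * wx j *
          (K * ((1/8) * negEi ((∑ k, (x ξ k - x j k)^2)/(4*bmax^2))
          * (2*(x ξ η - x j η)))) else 0))
        = ∑ j, wx ξ * wx j * (K * ((1/8) * negEi ((∑ k, (x ξ k - x j k)^2)/(4*bmax^2))
          * (2*(x ξ η - x j η)))) := by
      have h : ∀ i : Fin L, (∑ j, (if i = ξ then wx i * wx j *
          (K * ((1/8) * negEi ((∑ k, (x ξ k - x j k)^2)/(4*bmax^2))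
          * (2*(x ξ η - x j η)))) else 0))
          = (if i = ξ then ∑ j, wx i * wx j *
          (K * ((1/8) * negEi ((∑ k, (x ξ k - x j k)^2)/(4*bmax^2))
          * (2*(x ξ η - x j η)))) else 0) := by
        intro i
        split_ifs <;> simp
      simp_rw [h]
      rw [Finset.sum_ite_eq' Finset.univ ξ]
      simp only [Finset.mem_univ, if_true]
    have hB : (∑ i : Fin L, ∑ j, (if j = ξ then wx i * wx j *
          (K * ((1/8) * negEi ((∑ k, (x i k - x ξ k)^2)/(4*bmax^2))
          * (2*(x ξ η - x i η)))) else 0))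
        = ∑ i, wx i * wx ξ * (K * ((1/8) * negEi ((∑ k, (x i k - x ξ k)^2)/(4*bmax^2))
          * (2*(x ξ η - x i η)))) := by
      refine Finset.sum_congr rfl fun i _ => ?_
      rw [Finset.sum_ite_eq' Finset.univ ξ]
      simp only [Finset.mem_univ, if_true]
    rw [hA, hB, ← Finset.sum_add_distrib, Finset.mul_sum]
    refine Finset.sum_congr rfl fun i _ => ?_
    have hq : (∑ k, (x i k - x ξ k)^2) = ∑ k, (x ξ k - x i k)^2 :=
      Finset.sum_congr rfl fun k _ => by ring
    rw [hq]
    ring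
  rw [hDmid, hDtop] at hzero
  have hc : (0:ℝ) < wx ξ * K / 2 := by
    have := hwx ξ
    positivity
  refine mul_left_cancel₀ (ne_of_gt hc) ?_
  linarith [hzero]
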